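/- arXiv:0901.0660 — 3 statements merged into one kernel-verified Lean document; each statement's English description precedes it below -/
import Mathlib

section
/- Let (L, F) be a filtered cochain complex of abelian groups and let Dec(F) be the shifted filtration defined by Dec(F)^n L^l := { x ∈ F^{n+l} L^l : dx ∈ F^{n+l+1} L^{l+1} }. Then the induced filtrations on cohomology satisfy Dec(F)^n H^l(L) = F^{n+l} H^l(L), where the induced filtration on H^l(L) of a filtration G on L is the image of H^l(G^n L) in H^l(L) (equivalently, classes representable by cocycles in G^n L^l). -/
/-!
STATEMENT 1.
Let `(L, F)` be a filtered cochain complex of abelian groups and `Dec(F)` the shifted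
filtration `Dec(F)^n L^l := { x ∈ F^{n+l} L^l : d x ∈ F^{n+l+1} L^{l+1} }`.
Then the induced filtrations on cohomology satisfy `Dec(F)^n H^l(L) = F^{n+l} H^l(L)`.

Here the cohomology in degree `l+1` is realized as the quotient `L^{l+1} ⧸ im (d^l)`, and the
induced filtration `G^n H^{l+1}(L)` of a filtration `G` is the image in this quotient of the set
of cocycles lying in `G^n L^{l+1}` (i.e. `(G^n L^{l+1} ∩ ker d + im d)/im d`).  As `l` ranges
over `ℤ`, the degree `l+1` ranges over all of `ℤ`.
-/
theorem dec_filtration_on_cohomology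
    -- the cochain complex of abelian groups
    (L : ℤ → Type*) [∀ l, AddCommGroup (L l)]
    (d : ∀ l : ℤ, L l →+ L (l + 1))
    (hdd : ∀ (l : ℤ) (x : L l), d (l + 1) (d l x) = 0)
    -- the decreasing filtration by subcomplexes
    (F : ℤ → ∀ l : ℤ, AddSubgroup (L l))
    (hFdec : ∀ i l : ℤ, F (i + 1) l ≤ F i l)
    (hFd : ∀ (i l : ℤ) (x : L l), x ∈ F i l → d l x ∈ F i (l + 1))
    -- the shifted filtration `Dec(F)`
    (Dec : ℤ → ∀ l : ℤ, Set (L l))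
    (hDec : ∀ n l : ℤ,
      Dec n l = {x : L l | x ∈ F (n + l) l ∧ d l x ∈ F (n + l + 1) (l + 1)}) :
    -- `Dec(F)^n H^{l+1}(L) = F^{n+(l+1)} H^{l+1}(L)` inside `H^{l+1}(L) ⊆ L^{l+1} ⧸ im d`
    ∀ n l : ℤ,
      (QuotientAddGroup.mk (s := (d l).range) ''
          {x : L (l + 1) | x ∈ Dec n (l + 1) ∧ d (l + 1) x = 0})
      = (QuotientAddGroup.mk (s := (d l).range) ''
          {x : L (l + 1) | x ∈ F (n + (l + 1)) (l + 1) ∧ d (l + 1) x = 0}) := by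
  intro n l
  have h : {x : L (l + 1) | x ∈ Dec n (l + 1) ∧ d (l + 1) x = 0}
      = {x : L (l + 1) | x ∈ F (n + (l + 1)) (l + 1) ∧ d (l + 1) x = 0} := by
    ext x
    simp only [hDec, Set.mem_setOf_eq]
    constructor
    · rintro ⟨⟨h1, -⟩, h2⟩
      exact ⟨h1, h2⟩
    · rintro ⟨h1, h2⟩
      exact ⟨⟨h1, h2 ▸ zero_mem _⟩, h2⟩
  rw [h]
end

section
/- Let L be a cochain complex of abelian groups equipped with two decreasing filtrations P and F by subcomplexes, both finite (exhaustive and eventually zero). Assume that for all integers a, b, r with r ≠ a − b, the cohomology H^r(Gr_P^b Gr_F^a L) vanishes, where Gr_P^b Gr_F^a L = (P^b ∩ F^a)/(P^{b+1} ∩ F^a + P^b ∩ F^{a+1}). Then the induced filtrations on cohomology satisfy P = Dec(F) on H^*(L); that is, for all n and l, P^n H^l(L) = F^{n+l} H^l(L). -/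
/-!
STATEMENT 2.
Let `L` be a cochain complex of abelian groups with two decreasing filtrations `P` and `F` by
subcomplexes, both finite (exhaustive and eventually zero in each degree).  Assume that for all
integers `a`, `b`, `r` with `r ≠ a − b` the cohomology `H^r(Gr_P^b Gr_F^a L)` vanishes, where
`Gr_P^b Gr_F^a L = (P^b ∩ F^a)/(P^{b+1} ∩ F^a + P^b ∩ F^{a+1})`.  (The vanishing is stated
elementwise: every cocycle of the graded complex is a boundary of the graded complex.)
Then the induced filtrations on cohomology satisfy `P = Dec(F)`:
for all `n` and `l`, `P^n H^l(L) = F^{n+l} H^l(L)`.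

The cohomology in degree `l+1` is realized as a quotient of `L^{l+1} ⧸ im (d^l)`, and the
induced filtration of a filtration `G` is the image there of the cocycles lying in `G`;
recall `Dec(F)^n H^l = F^{n+l} H^l`, so the conclusion is stated with `F^{n+(l+1)}`.
-/
theorem bifiltered_graded_vanishing_implies_P_eq_DecF
    -- the cochain complex of abelian groups
    (L : ℤ → Type*) [∀ l, AddCommGroup (L l)]
    (d : ∀ l : ℤ, L l →+ L (l + 1))
    (hdd : ∀ (l : ℤ) (x : L l), d (l + 1) (d l x) = 0)
    -- the two decreasing filtrations by subcomplexes
    (P F : ℤ → ∀ l : ℤ, AddSubgroup (L l))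
    (hPdec : ∀ i l : ℤ, P (i + 1) l ≤ P i l)
    (hPd : ∀ (i l : ℤ) (x : L l), x ∈ P i l → d l x ∈ P i (l + 1))
    (hFdec : ∀ i l : ℤ, F (i + 1) l ≤ F i l)
    (hFd : ∀ (i l : ℤ) (x : L l), x ∈ F i l → d l x ∈ F i (l + 1))
    -- finiteness of the filtrations in each degree
    (hPfin : ∀ l : ℤ, ∃ m M : ℤ,
      (∀ b ≤ m, P b l = ⊤) ∧ (∀ b, M ≤ b → P b l = ⊥))
    (hFfin : ∀ l : ℤ, ∃ m M : ℤ,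
      (∀ a ≤ m, F a l = ⊤) ∧ (∀ a, M ≤ a → F a l = ⊥))
    -- vanishing of `H^r (Gr_P^b Gr_F^a L)` for `r ≠ a - b`, stated elementwise in degree `l+1`
    (hvanish : ∀ a b l : ℤ, (l + 1 : ℤ) ≠ a - b →
      ∀ x : L (l + 1),
        x ∈ P b (l + 1) ⊓ F a (l + 1) →
        d (l + 1) x ∈
          ((P (b + 1) (l + 1 + 1) ⊓ F a (l + 1 + 1))
            ⊔ (P b (l + 1 + 1) ⊓ F (a + 1) (l + 1 + 1))) →
        ∃ y : L l, y ∈ P b l ⊓ F a l ∧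
          x - d l y ∈
            ((P (b + 1) (l + 1) ⊓ F a (l + 1))
              ⊔ (P b (l + 1) ⊓ F (a + 1) (l + 1)))) :
    -- conclusion: `P^n H^{l+1}(L) = Dec(F)^n H^{l+1}(L) = F^{n+(l+1)} H^{l+1}(L)`
    ∀ n l : ℤ,
      (QuotientAddGroup.mk (s := (d l).range) ''
          {x : L (l + 1) | x ∈ P n (l + 1) ∧ d (l + 1) x = 0})
      = (QuotientAddGroup.mk (s := (d l).range) ''
          {x : L (l + 1) | x ∈ F (n + (l + 1)) (l + 1) ∧ d (l + 1) x = 0}) := by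
  intro n l
  -- monotonicity of the filtrations
  have Pmono : ∀ (k i j : ℤ), i ≤ j → P j k ≤ P i k := fun k i =>
    Int.le_induction le_rfl (fun j_ _ ih => (hPdec j_ k).trans ih)
  have Fmono : ∀ (k i j : ℤ), i ≤ j → F j k ≤ F i k := fun k i =>
    Int.le_induction le_rfl (fun j_ _ ih => (hFdec j_ k).trans ih)
  obtain ⟨mP, MP, hPtop, hPbot⟩ := hPfin (l + 1)
  obtain ⟨mF, MF, hFtop, hFbot⟩ := hFfin (l + 1)
  -- Inner lemma 1: pushing the F-level of a cocycle up by one, at fixed P-level n.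
  have inner1 : ∀ a : ℤ, a - n < l + 1 →
      ∀ k : ℕ, ∀ b : ℤ, n ≤ b → MP ≤ b + k →
      ∀ u v : L (l + 1), u ∈ P b (l + 1) → u ∈ F a (l + 1) →
        v ∈ P n (l + 1) → v ∈ F (a + 1) (l + 1) →
        d (l + 1) (u + v) = 0 →
        ∃ z y, z ∈ P n (l + 1) ∧ z ∈ F (a + 1) (l + 1) ∧ d (l + 1) z = 0 ∧
          u + v = z + d l y := by
    intro a ha k
    induction k with
    | zero =>
      intro b hb hMP u v hu1 hu2 hv1 hv2 hd0
      have hu0 : u = 0 := by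
        have h : u ∈ (⊥ : AddSubgroup (L (l + 1))) := by
          rw [← hPbot b (by omega)]; exact hu1
        simpa using h
      refine ⟨v, 0, hv1, hv2, ?_, by simp [hu0]⟩
      rw [hu0, zero_add] at hd0; exact hd0
    | succ k ih =>
      intro b hb hMP u v hu1 hu2 hv1 hv2 hd0
      by_cases hbB : MP ≤ b
      · have hu0 : u = 0 := by
          have h : u ∈ (⊥ : AddSubgroup (L (l + 1))) := by
            rw [← hPbot b hbB]; exact hu1
          simpa using h
        refine ⟨v, 0, hv1, hv2, ?_, by simp [hu0]⟩
        rw [hu0, zero_add] at hd0; exact hd0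
      · have hne : (l + 1 : ℤ) ≠ a - b := by omega
        have hdu : d (l + 1) u = -(d (l + 1) v) := by
          have h := map_add (d (l + 1)) u v
          rw [hd0] at h
          exact eq_neg_of_add_eq_zero_left h.symm
        have hdumem : d (l + 1) u ∈
            ((P (b + 1) (l + 1 + 1) ⊓ F a (l + 1 + 1))
              ⊔ (P b (l + 1 + 1) ⊓ F (a + 1) (l + 1 + 1))) := by
          refine (le_sup_right :
            (P b (l + 1 + 1) ⊓ F (a + 1) (l + 1 + 1)) ≤ _) ?_
          refine AddSubgroup.mem_inf.mpr ⟨hPd b (l + 1) u hu1, ?_⟩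
          rw [hdu]
          exact neg_mem (hFd (a + 1) (l + 1) v hv2)
        obtain ⟨y, _, hres⟩ := hvanish a b l hne u (AddSubgroup.mem_inf.mpr ⟨hu1, hu2⟩) hdumem
        rw [AddSubgroup.mem_sup] at hres
        obtain ⟨u', hu', w, hw, hsum⟩ := hres
        obtain ⟨hu'P, hu'F⟩ := AddSubgroup.mem_inf.mp hu'
        obtain ⟨hwP, hwF⟩ := AddSubgroup.mem_inf.mp hw
        have e1 : u' + (w + v) = (u + v) - d l y := by
          rw [← add_assoc, hsum]; abel
        have hd1 : d (l + 1) (u' + (w + v)) = 0 := by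
          rw [e1, map_sub, hd0, hdd l y, sub_zero]
        obtain ⟨z, y', hz1, hz2, hz3, hz4⟩ :=
          ih (b + 1) (by omega) (by omega) u' (w + v) hu'P hu'F
            (add_mem (Pmono (l + 1) n b hb hwP) hv1) (add_mem hwF hv2) hd1
        refine ⟨z, y' + y, hz1, hz2, hz3, ?_⟩
        have : u + v = (u' + (w + v)) + d l y := by rw [e1]; abel
        rw [this, hz4, map_add]; abel
  -- Inner lemma 2: pushing the P-level of a cocycle up by one, at fixed F-level n + (l+1).
  have inner2 : ∀ b : ℤ, b < n →
      ∀ k : ℕ, ∀ a : ℤ, n + (l + 1) ≤ a → MF ≤ a + k →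
      ∀ u v : L (l + 1),
        u ∈ P (b + 1) (l + 1) → u ∈ F (n + (l + 1)) (l + 1) →
        v ∈ P b (l + 1) → v ∈ F a (l + 1) →
        d (l + 1) (u + v) = 0 →
        ∃ z y, z ∈ P (b + 1) (l + 1) ∧ z ∈ F (n + (l + 1)) (l + 1) ∧
          d (l + 1) z = 0 ∧ u + v = z + d l y := by
    intro b hb k
    induction k with
    | zero =>
      intro a haA hMF u v hu1 hu2 hv1 hv2 hd0
      have hv0 : v = 0 := by
        have h : v ∈ (⊥ : AddSubgroup (L (l + 1))) := by
          rw [← hFbot a (by omega)]; exact hv2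
        simpa using h
      refine ⟨u, 0, hu1, hu2, ?_, by simp [hv0]⟩
      rw [hv0, add_zero] at hd0; exact hd0
    | succ k ih =>
      intro a haA hMF u v hu1 hu2 hv1 hv2 hd0
      by_cases haB : MF ≤ a
      · have hv0 : v = 0 := by
          have h : v ∈ (⊥ : AddSubgroup (L (l + 1))) := by
            rw [← hFbot a haB]; exact hv2
          simpa using h
        refine ⟨u, 0, hu1, hu2, ?_, by simp [hv0]⟩
        rw [hv0, add_zero] at hd0; exact hd0
      · have hne : (l + 1 : ℤ) ≠ a - b := by omega
        have hdv : d (l + 1) v = -(d (l + 1) u) := by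
          have h := map_add (d (l + 1)) u v
          rw [hd0] at h
          exact eq_neg_of_add_eq_zero_right h.symm
        have hdvmem : d (l + 1) v ∈
            ((P (b + 1) (l + 1 + 1) ⊓ F a (l + 1 + 1))
              ⊔ (P b (l + 1 + 1) ⊓ F (a + 1) (l + 1 + 1))) := by
          refine (le_sup_left :
            (P (b + 1) (l + 1 + 1) ⊓ F a (l + 1 + 1)) ≤ _) ?_
          refine AddSubgroup.mem_inf.mpr ⟨?_, hFd a (l + 1) v hv2⟩
          rw [hdv]
          exact neg_mem (hPd (b + 1) (l + 1) u hu1)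
        obtain ⟨y, _, hres⟩ := hvanish a b l hne v (AddSubgroup.mem_inf.mpr ⟨hv1, hv2⟩) hdvmem
        rw [AddSubgroup.mem_sup] at hres
        obtain ⟨u', hu', w, hw, hsum⟩ := hres
        obtain ⟨hu'P, hu'F⟩ := AddSubgroup.mem_inf.mp hu'
        obtain ⟨hwP, hwF⟩ := AddSubgroup.mem_inf.mp hw
        have e1 : (u + u') + w = (u + v) - d l y := by
          rw [add_assoc, hsum]; abel
        have hd1 : d (l + 1) ((u + u') + w) = 0 := by
          rw [e1, map_sub, hd0, hdd l y, sub_zero]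
        obtain ⟨z, y', hz1, hz2, hz3, hz4⟩ :=
          ih (a + 1) (by omega) (by omega) (u + u') w
            (add_mem hu1 hu'P) (add_mem hu2 (Fmono (l + 1) (n + (l + 1)) a haA hu'F))
            hwP hwF hd1
        refine ⟨z, y' + y, hz1, hz2, hz3, ?_⟩
        have : u + v = ((u + u') + w) + d l y := by rw [e1]; abel
        rw [this, hz4, map_add]; abel
  -- Chain 1: from F-level (n + (l+1)) - k up to n + (l+1), staying at P-level n.
  have chain1 : ∀ k : ℕ, ∀ x : L (l + 1), x ∈ P n (l + 1) →
      x ∈ F (n + (l + 1) - k) (l + 1) → d (l + 1) x = 0 →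
      ∃ z y, z ∈ P n (l + 1) ∧ z ∈ F (n + (l + 1)) (l + 1) ∧ d (l + 1) z = 0 ∧
        x = z + d l y := by
    intro k
    induction k with
    | zero =>
      intro x hx1 hx2 hx3
      refine ⟨x, 0, hx1, ?_, hx3, by simp⟩
      simpa using hx2
    | succ k ih =>
      intro x hx1 hx2 hx3
      have ha : (n + (l + 1) - ((k : ℤ) + 1)) - n < l + 1 := by omega
      have hx2' : x ∈ F (n + (l + 1) - ((k : ℤ) + 1)) (l + 1) := by
        have e : (n + (l + 1) - ((k + 1 : ℕ) : ℤ)) = n + (l + 1) - ((k : ℤ) + 1) := by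
          push_cast; ring
        rw [← e]; exact hx2
      have hMP : MP ≤ n + ((MP - n).toNat : ℤ) := by
        have := Int.self_le_toNat (MP - n); omega
      obtain ⟨z, y, hz1, hz2, hz3, hz4⟩ :=
        inner1 (n + (l + 1) - ((k : ℤ) + 1)) ha (MP - n).toNat n le_rfl hMP
          x 0 hx1 hx2' (zero_mem _) (zero_mem _) (by rwa [add_zero])
      have e2 : n + (l + 1) - ((k : ℤ) + 1) + 1 = n + (l + 1) - (k : ℤ) := by ring
      rw [e2] at hz2
      obtain ⟨z', y', hz1', hz2', hz3', hz4'⟩ := ih z hz1 hz2 hz3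
      refine ⟨z', y' + y, hz1', hz2', hz3', ?_⟩
      have : x = z + d l y := by rw [← hz4]; abel
      rw [this, hz4', map_add]; abel
  -- Chain 2: from P-level n - k up to n, staying at F-level n + (l+1).
  have chain2 : ∀ k : ℕ, ∀ x : L (l + 1), x ∈ P (n - k) (l + 1) →
      x ∈ F (n + (l + 1)) (l + 1) → d (l + 1) x = 0 →
      ∃ z y, z ∈ P n (l + 1) ∧ z ∈ F (n + (l + 1)) (l + 1) ∧ d (l + 1) z = 0 ∧
        x = z + d l y := by
    intro k
    induction k with
    | zero =>
      intro x hx1 hx2 hx3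
      refine ⟨x, 0, ?_, hx2, hx3, by simp⟩
      simpa using hx1
    | succ k ih =>
      intro x hx1 hx2 hx3
      have hb : (n - ((k : ℤ) + 1)) < n := by omega
      have hx1' : x ∈ P (n - ((k : ℤ) + 1)) (l + 1) := by
        have e : (n - ((k + 1 : ℕ) : ℤ)) = n - ((k : ℤ) + 1) := by push_cast; ring
        rw [← e]; exact hx1
      have hMF : MF ≤ (n + (l + 1)) + ((MF - (n + (l + 1))).toNat : ℤ) := by
        have := Int.self_le_toNat (MF - (n + (l + 1))); omega
      obtain ⟨z, y, hz1, hz2, hz3, hz4⟩ :=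
        inner2 (n - ((k : ℤ) + 1)) hb (MF - (n + (l + 1))).toNat (n + (l + 1)) le_rfl hMF
          0 x (zero_mem _) (zero_mem _) hx1' hx2 (by rwa [zero_add])
      have e2 : n - ((k : ℤ) + 1) + 1 = n - (k : ℤ) := by ring
      rw [e2] at hz1
      obtain ⟨z', y', hz1', hz2', hz3', hz4'⟩ := ih z hz1 hz2 hz3
      refine ⟨z', y' + y, hz1', hz2', hz3', ?_⟩
      have : x = z + d l y := by rw [← hz4]; abel
      rw [this, hz4', map_add]; abel
  -- Conclusion
  ext q
  simp only [Set.mem_image, Set.mem_setOf_eq]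
  constructor
  · rintro ⟨x, ⟨hxP, hxd⟩, rfl⟩
    -- x lies in F at some very low level
    have hx2 : x ∈ F (n + (l + 1) - ((n + (l + 1) - min mF (n + (l + 1))).toNat : ℤ)) (l + 1) := by
      have hnn : (0 : ℤ) ≤ n + (l + 1) - min mF (n + (l + 1)) := by
        have := min_le_right mF (n + (l + 1)); omega
      have e : n + (l + 1) - ((n + (l + 1) - min mF (n + (l + 1))).toNat : ℤ)
          = min mF (n + (l + 1)) := by
        rw [Int.toNat_of_nonneg hnn]; ring
      rw [e, hFtop _ (min_le_left _ _)]
      exact AddSubgroup.mem_top x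
    obtain ⟨z, y, hz1, hz2, hz3, hz4⟩ := chain1 _ x hxP hx2 hxd
    refine ⟨z, ⟨hz2, hz3⟩, ?_⟩
    refine (QuotientAddGroup.eq).mpr ?_
    exact ⟨y, by rw [hz4]; abel⟩
  · rintro ⟨x, ⟨hxF, hxd⟩, rfl⟩
    have hx1 : x ∈ P (n - ((n - min mP n).toNat : ℤ)) (l + 1) := by
      have hnn : (0 : ℤ) ≤ n - min mP n := by
        have := min_le_right mP n; omega
      have e : n - ((n - min mP n).toNat : ℤ) = min mP n := by
        rw [Int.toNat_of_nonneg hnn]; ring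
      rw [e, hPtop _ (min_le_left _ _)]
      exact AddSubgroup.mem_top x
    obtain ⟨z, y, hz1, hz2, hz3, hz4⟩ := chain2 _ x hx1 hxF hxd
    refine ⟨z, ⟨hz1, hz3⟩, ?_⟩
    refine (QuotientAddGroup.eq).mpr ?_
    exact ⟨y, by rw [hz4]; abel⟩
end

section
/- Let L be a cochain complex of abelian groups with a finite decreasing filtration F by subcomplexes such that for all a and all r ≠ a, H^r(Gr_F^a L) = 0. Then for every l, the induced filtration F on H^l(L) satisfies: F^a H^l(L) = H^l(L) for a ≤ l and F^a H^l(L) = 0 for a > l; in particular Gr_F^a H^l(L) = 0 unless a = l. -/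
/-!
STATEMENT 3.
Let `L` be a cochain complex of abelian groups with a finite decreasing filtration `F` by
subcomplexes such that `H^r(Gr_F^a L) = 0` for all `a` and all `r ≠ a` (stated elementwise:
every cocycle of `Gr_F^a L = F^a L / F^{a+1} L` in degree `r ≠ a` is a boundary).
Then for every `l` the induced filtration on cohomology satisfies
`F^a H^l(L) = H^l(L)` for `a ≤ l` and `F^a H^l(L) = 0` for `a > l`;
in particular `Gr_F^a H^l(L) = 0` unless `a = l`.

The cohomology in degree `l+1` is realized inside `L^{l+1} ⧸ im (d^l)` as the image of the
cocycles; the induced filtration is the image of the cocycles lying in `F^a`.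
-/
theorem filtration_with_graded_cohomology_concentrated
    -- the cochain complex of abelian groups
    (L : ℤ → Type*) [∀ l, AddCommGroup (L l)]
    (d : ∀ l : ℤ, L l →+ L (l + 1))
    (hdd : ∀ (l : ℤ) (x : L l), d (l + 1) (d l x) = 0)
    -- the decreasing filtration by subcomplexes
    (F : ℤ → ∀ l : ℤ, AddSubgroup (L l))
    (hFdec : ∀ i l : ℤ, F (i + 1) l ≤ F i l)
    (hFd : ∀ (i l : ℤ) (x : L l), x ∈ F i l → d l x ∈ F i (l + 1))
    -- finiteness (exhaustive and eventually zero) in each degree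
    (hFfin : ∀ l : ℤ, ∃ m M : ℤ,
      (∀ a ≤ m, F a l = ⊤) ∧ (∀ a, M ≤ a → F a l = ⊥))
    -- `H^r(Gr_F^a L) = 0` for `r ≠ a`, stated elementwise in degree `l+1`
    (hvanish : ∀ a l : ℤ, (l + 1 : ℤ) ≠ a →
      ∀ x : L (l + 1),
        x ∈ F a (l + 1) →
        d (l + 1) x ∈ F (a + 1) (l + 1 + 1) →
        ∃ y : L l, y ∈ F a l ∧ x - d l y ∈ F (a + 1) (l + 1)) :
    ∀ a l : ℤ,
      -- `F^a H^{l+1}(L) = H^{l+1}(L)` for `a ≤ l+1`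
      (a ≤ l + 1 →
        (QuotientAddGroup.mk (s := (d l).range) ''
            {x : L (l + 1) | x ∈ F a (l + 1) ∧ d (l + 1) x = 0})
        = (QuotientAddGroup.mk (s := (d l).range) ''
            {x : L (l + 1) | d (l + 1) x = 0}))
      -- and `F^a H^{l+1}(L) = 0` for `a > l+1`
      ∧ (l + 1 < a →
        (QuotientAddGroup.mk (s := (d l).range) ''
            {x : L (l + 1) | x ∈ F a (l + 1) ∧ d (l + 1) x = 0})
        = {(0 : L (l + 1) ⧸ (d l).range)}) := by
  intro a l
  obtain ⟨m, M, hm, hM⟩ := hFfin (l + 1)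
  -- Lemma A: ascend the filtration as long as the index stays ≤ l+1
  have lemA : ∀ n : ℕ, ∀ b : ℤ, b + n ≤ l + 1 → ∀ x : L (l + 1),
      x ∈ F b (l + 1) → d (l + 1) x = 0 →
      ∃ x' : L (l + 1), x' ∈ F (b + n) (l + 1) ∧ d (l + 1) x' = 0 ∧
        (QuotientAddGroup.mk (s := (d l).range) x'
          = QuotientAddGroup.mk (s := (d l).range) x) := by
    intro n
    induction n with
    | zero =>
      intro b _ x hx hdx
      exact ⟨x, by simpa using hx, hdx, rfl⟩
    | succ n ih =>
      intro b hb x hx hdx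
      have hne : (l + 1 : ℤ) ≠ b := by push_cast at hb; omega
      obtain ⟨y, hy, hxy⟩ := hvanish b l hne x hx (by rw [hdx]; exact zero_mem _)
      have hdx' : d (l + 1) (x - d l y) = 0 := by
        rw [map_sub, hdx, hdd, sub_zero]
      obtain ⟨x', hx', hdx'', hmk⟩ :=
        ih (b + 1) (by push_cast at hb ⊢; omega) (x - d l y) hxy hdx'
      have hcast : (b + 1 : ℤ) + (n : ℤ) = b + ((n + 1 : ℕ) : ℤ) := by push_cast; ring
      rw [hcast] at hx'
      refine ⟨x', hx', hdx'', ?_⟩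
      rw [hmk, QuotientAddGroup.eq_iff_sub_mem]
      have : (x - d l y) - x = -(d l y) := by abel
      rw [this]
      exact neg_mem (AddMonoidHom.mem_range.mpr ⟨y, rfl⟩)
  -- Lemma B: a cocycle in F^b with l+1 < b is a boundary
  have lemB : ∀ n : ℕ, ∀ b : ℤ, M ≤ b + n → l + 1 < b → ∀ x : L (l + 1),
      x ∈ F b (l + 1) → d (l + 1) x = 0 → x ∈ (d l).range := by
    intro n
    induction n with
    | zero =>
      intro b hb _ x hx _
      rw [hM b (by push_cast at hb; omega)] at hx
      rw [AddSubgroup.mem_bot] at hx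
      rw [hx]; exact zero_mem _
    | succ n ih =>
      intro b hb hlb x hx hdx
      have hne : (l + 1 : ℤ) ≠ b := by omega
      obtain ⟨y, hy, hxy⟩ := hvanish b l hne x hx (by rw [hdx]; exact zero_mem _)
      have hdx' : d (l + 1) (x - d l y) = 0 := by
        rw [map_sub, hdx, hdd, sub_zero]
      have h1 := ih (b + 1) (by push_cast at hb ⊢; omega) (by omega) (x - d l y) hxy hdx'
      have hxe : x = (x - d l y) + d l y := by abel
      rw [hxe]
      exact add_mem h1 (AddMonoidHom.mem_range.mpr ⟨y, rfl⟩)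
  constructor
  · intro hal
    apply Set.Subset.antisymm
    · exact Set.image_mono (fun x hx => hx.2)
    · rintro z ⟨x, hdx, rfl⟩
      have hbm : min m a ≤ m := min_le_left m a
      have hFb : x ∈ F (min m a) (l + 1) := by
        rw [hm (min m a) hbm]; trivial
      have hban : (min m a) + (((a - min m a).toNat : ℤ)) = a := by
        rw [Int.toNat_of_nonneg (by omega)]; ring
      obtain ⟨x', hx', hdx', hmk⟩ :=
        lemA (a - min m a).toNat (min m a) (by rw [hban]; exact hal) x hFb hdx
      rw [hban] at hx'
      exact ⟨x', ⟨hx', hdx'⟩, hmk⟩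
  · intro hla
    apply Set.eq_singleton_iff_unique_mem.mpr
    constructor
    · exact ⟨0, ⟨zero_mem _, map_zero _⟩, rfl⟩
    · rintro z ⟨x, ⟨hxF, hdx⟩, rfl⟩
      have hMa : M ≤ a + ((M - a).toNat : ℤ) := by
        have := Int.self_le_toNat (M - a); omega
      exact (QuotientAddGroup.eq_zero_iff x).mpr
        (lemB (M - a).toNat a hMa hla x hxF hdx)
end
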